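/- Let S ⊆ (Fin n → ℝ) be finite, P = convexHull ℝ S with at least two extreme points, let V be an extreme point of P, and let P₁ = {p − V : p ∈ P}. Suppose c : Fin n → ℝ satisfies c·x ≤ 0 for all x ∈ P₁ and {x ∈ P₁ : c·x = 0} = {0}, and suppose α < 0 satisfies c·(W − V) < α for every extreme point W ≠ V of P. Let K_V be the convex cone generated by the vertex vectors at V and let P' = P₁ ∩ {x : c·x = α}. Then P' is a convex base of K_V: P' is convex, P' ⊆ K_V, 0 ∉ P', and for every u ∈ K_V with u ≠ 0 there exist a unique t > 0 and a unique v ∈ P' with u = t • v. -/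

import Mathlib

/-- The convex cone `K_V` generated by the vertex vectors at `V`: all finite nonnegative
combinations `∑_W r_W • (W − V)`, `W` ranging over the extreme points of `P` other than `V`. -/
def Kcone {n : ℕ} (P : Set (Fin n → ℝ)) (V : Fin n → ℝ) : Set (Fin n → ℝ) :=
  {x | ∃ r : (Fin n → ℝ) →₀ ℝ, (∀ W, 0 ≤ r W) ∧
    (∀ W ∈ r.support, W ∈ Set.extremePoints ℝ P ∧ W ≠ V) ∧
    x = r.sum (fun W c => c • (W - V))}

/-- The dot-product linear functional `x ↦ ∑ i, c i * x i`. -/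
noncomputable def dotL (n : ℕ) (c : Fin n → ℝ) : (Fin n → ℝ) →ₗ[ℝ] ℝ where
  toFun x := ∑ i, c i * x i
  map_add' x y := by
    simp only [Pi.add_apply, mul_add, Finset.sum_add_distrib]
  map_smul' a x := by
    simp only [Pi.smul_apply, smul_eq_mul, RingHom.id_apply, Finset.mul_sum]
    exact Finset.sum_congr rfl fun i _ => by ring

/-- The vertex figure `P' = P₁ ∩ {x | c·x = α}` of the translated polytope
`P₁ = P − V` at the vertex `V` is a convex base of the cone `K_V`. -/
theorem stmt_19 (n : ℕ) (S : Set (Fin n → ℝ)) (hSf : S.Finite)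
    (P : Set (Fin n → ℝ)) (hP : P = convexHull ℝ S)
    (h2 : ∃ V W : Fin n → ℝ, V ∈ Set.extremePoints ℝ P ∧ W ∈ Set.extremePoints ℝ P ∧ V ≠ W)
    (V : Fin n → ℝ) (hV : V ∈ Set.extremePoints ℝ P)
    (P₁ : Set (Fin n → ℝ)) (hP₁ : P₁ = (fun p => p - V) '' P)
    (c : Fin n → ℝ)
    (hc1 : ∀ x ∈ P₁, (∑ i, c i * x i) ≤ 0)
    (hc2 : {x ∈ P₁ | (∑ i, c i * x i) = 0} = {(0 : Fin n → ℝ)})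
    (α : ℝ) (hα : α < 0)
    (hαlt : ∀ W ∈ Set.extremePoints ℝ P, W ≠ V → (∑ i, c i * (W i - V i)) < α)
    (K : Set (Fin n → ℝ)) (hK : K = Kcone P V)
    (P' : Set (Fin n → ℝ)) (hP' : P' = P₁ ∩ {x | (∑ i, c i * x i) = α}) :
    Convex ℝ P' ∧ P' ⊆ K ∧ (0 : Fin n → ℝ) ∉ P' ∧
      ∀ u ∈ K, u ≠ 0 →
        ∃! tv : ℝ × (Fin n → ℝ), 0 < tv.1 ∧ tv.2 ∈ P' ∧ u = tv.1 • tv.2 := by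
  subst hP₁ hK hP'
  set f : (Fin n → ℝ) →ₗ[ℝ] ℝ := dotL n c with hfdef
  have hfx : ∀ x, f x = ∑ i, c i * x i := fun _ => rfl
  have hPconv : Convex ℝ P := hP ▸ convex_convexHull ℝ S
  have hextP : Set.extremePoints ℝ P ⊆ P := extremePoints_subset
  have hextFin : (Set.extremePoints ℝ P).Finite := by
    apply hSf.subset
    rw [hP]
    exact extremePoints_convexHull_subset
  have hKM : P = convexHull ℝ (Set.extremePoints ℝ P) := by
    have h1 := closure_convexHull_extremePoints (hP ▸ hSf.isCompact_convexHull ℝ) hPconv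
    rw [(hextFin.isClosed_convexHull ℝ).closure_eq] at h1
    exact h1.symm
  have hαlt' : ∀ W ∈ Set.extremePoints ℝ P, W ≠ V → f (W - V) < α := by
    intro W h1 h2'
    have := hαlt W h1 h2'
    rw [hfx]
    simpa using this
  -- P₁ is convex
  have hP₁conv : Convex ℝ ((fun p => p - V) '' P) := by
    rintro x ⟨p, hp, rfl⟩ y ⟨q, hq, rfl⟩ a b ha hb hab
    refine ⟨a • p + b • q, hPconv hp hq ha hb hab, ?_⟩
    have halg : a • (p - V) + b • (q - V) = a • p + b • q - (a + b) • V := by module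
    rw [halg, hab, one_smul]
  -- decomposition of cone sums
  have hconeSum : ∀ r : (Fin n → ℝ) →₀ ℝ,
      r.sum (fun W cc => cc • (W - V)) =
        (∑ W ∈ r.support, r W • W) - (∑ W ∈ r.support, r W) • V := by
    intro r
    rw [Finsupp.sum]
    simp only [smul_sub, Finset.sum_sub_distrib, Finset.sum_smul]
  -- f on cone elements
  have hfcone : ∀ r : (Fin n → ℝ) →₀ ℝ,
      (∀ W, 0 ≤ r W) → (∀ W ∈ r.support, W ∈ Set.extremePoints ℝ P ∧ W ≠ V) →
      f (r.sum (fun W cc => cc • (W - V))) ≤ (∑ W ∈ r.support, r W) * α := by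
    intro r hr0 hrs
    rw [map_finsuppSum, Finsupp.sum, Finset.sum_mul]
    apply Finset.sum_le_sum
    intro W hW
    rw [map_smul, smul_eq_mul]
    exact mul_le_mul_of_nonneg_left (le_of_lt (hαlt' W (hrs W hW).1 (hrs W hW).2)) (hr0 W)
  -- scaling the cone
  have hscale : ∀ (t : ℝ), 0 ≤ t → ∀ u ∈ Kcone P V, t • u ∈ Kcone P V := by
    rintro t ht u ⟨r, hr0, hrs, rfl⟩
    refine ⟨t • r, ?_, ?_, ?_⟩
    · intro W
      rw [Finsupp.smul_apply, smul_eq_mul]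
      exact mul_nonneg ht (hr0 W)
    · intro W hW
      exact hrs W (Finsupp.support_smul hW)
    · rw [Finsupp.sum_smul_index' (h := fun W cc => cc • (W - V))
        (fun W => zero_smul ℝ (W - V)), Finsupp.smul_sum]
      exact Finsupp.sum_congr fun W _ => (smul_assoc t _ _).symm
  -- cone elements on the hyperplane lie in P₁
  have hconeP₁ : ∀ u ∈ Kcone P V, f u = α → u ∈ (fun p => p - V) '' P := by
    rintro u ⟨r, hr0, hrs, rfl⟩ hfu
    set s : ℝ := ∑ W ∈ r.support, r W with hs
    have hs0 : 0 ≤ s := Finset.sum_nonneg fun W _ => hr0 W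
    have hkey := hfcone r hr0 hrs
    rw [hfu] at hkey
    have hs1 : s ≤ 1 := by nlinarith
    have hVnot : V ∉ r.support := fun h => (hrs V h).2 rfl
    classical
    have hwV : (if V = V then 1 - s else r V) = 1 - s := if_pos rfl
    have hwy : ∀ y ∈ r.support, (if y = V then 1 - s else r y) = r y := fun y hy =>
      if_neg (hrs y hy).2
    have hmemP : r.sum (fun W cc => cc • (W - V)) + V ∈ P := by
      have hsum := hPconv.sum_mem (t := insert V r.support)
        (w := fun y => if y = V then 1 - s else r y) (z := id)
        (by
          intro y _
          show 0 ≤ (if y = V then 1 - s else r y)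
          split_ifs with h
          · linarith
          · exact hr0 y)
        (by
          rw [Finset.sum_insert hVnot]
          simp only
          rw [if_pos trivial, Finset.sum_congr rfl hwy]
          ring)
        (by
          intro y hy
          rcases Finset.mem_insert.1 hy with h | h
          · exact h ▸ hextP hV
          · exact hextP (hrs y h).1)
      rw [Finset.sum_insert hVnot] at hsum
      simp only at hsum
      rw [if_pos trivial, Finset.sum_congr rfl (fun y hy => by rw [hwy y hy])] at hsum
      have halg : r.sum (fun W cc => cc • (W - V)) + V =
          (1 - s) • id V + ∑ y ∈ r.support, r y • y := by
        rw [hconeSum r, ← hs, sub_smul, one_smul]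
        simp only [id]
        abel
      rw [halg]
      exact hsum
    exact ⟨r.sum (fun W cc => cc • (W - V)) + V, hmemP, by simp⟩
  -- P₁ ⊆ K
  have hP₁K : ∀ x ∈ (fun p => p - V) '' P, x ∈ Kcone P V := by
    rintro x ⟨p, hp, rfl⟩
    set T : Finset (Fin n → ℝ) := hextFin.toFinset with hT
    have hpT : p ∈ convexHull ℝ (T : Set (Fin n → ℝ)) := by
      rw [hT, hextFin.coe_toFinset, ← hKM]
      exact hp
    obtain ⟨w, hw0, hw1, hwp⟩ := Finset.mem_convexHull'.1 hpT
    refine ⟨Finsupp.indicator (T.erase V) (fun y _ => w y), ?_, ?_, ?_⟩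
    · intro W
      by_cases h : W ∈ T.erase V
      · rw [Finsupp.indicator_of_mem h]
        exact hw0 W (Finset.mem_of_mem_erase h)
      · rw [Finsupp.indicator_of_notMem h]
    · intro W hW
      have hWe : W ∈ T.erase V := Finsupp.support_indicator_subset _ _ hW
      exact ⟨(hextFin.mem_toFinset).1 (Finset.mem_of_mem_erase hWe),
        Finset.ne_of_mem_erase hWe⟩
    · rw [Finsupp.sum_of_support_subset _
        (fun y hy => Finsupp.support_indicator_subset _ _ hy)
        (fun W cc => cc • (W - V)) (fun i _ => zero_smul ℝ (i - V))]
      have h1 : ∑ y ∈ T.erase V, Finsupp.indicator (T.erase V) (fun y _ => w y) y • (y - V)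
          = ∑ y ∈ T.erase V, w y • (y - V) := by
        apply Finset.sum_congr rfl
        intro y hy
        rw [Finsupp.indicator_of_mem hy]
      have h2 : ∑ y ∈ T.erase V, w y • (y - V) = ∑ y ∈ T, w y • (y - V) :=
        Finset.sum_erase T (by simp)
      have h3 : ∑ y ∈ T, w y • (y - V) = (∑ y ∈ T, w y • y) - (∑ y ∈ T, w y) • V := by
        simp only [smul_sub, Finset.sum_sub_distrib, Finset.sum_smul]
      rw [h1, h2, h3, hwp, hw1, one_smul]
  -- f u < 0 for nonzero cone elements
  have hfneg : ∀ u ∈ Kcone P V, u ≠ 0 → f u < 0 := by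
    rintro u ⟨r, hr0, hrs, rfl⟩ hu
    have hkey := hfcone r hr0 hrs
    have hsup : r.support.Nonempty := by
      rcases r.support.eq_empty_or_nonempty with h | h
      · exact absurd (by rw [Finsupp.support_eq_empty.1 h, Finsupp.sum_zero_index]) hu
      · exact h
    obtain ⟨W, hW⟩ := hsup
    have hWpos : 0 < r W := lt_of_le_of_ne (hr0 W) (Ne.symm (Finsupp.mem_support_iff.1 hW))
    have hspos : 0 < ∑ W ∈ r.support, r W :=
      Finset.sum_pos' (fun i _ => hr0 i) ⟨W, hW, hWpos⟩
    calc f (r.sum fun W cc => cc • (W - V)) ≤ (∑ W ∈ r.support, r W) * α := hkey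
      _ < 0 := mul_neg_of_pos_of_neg hspos hα
  -- assemble
  refine ⟨?_, ?_, ?_, ?_⟩
  · -- Convex P'
    have hhyp : Convex ℝ {x : Fin n → ℝ | (∑ i, c i * x i) = α} := by
      have : {x : Fin n → ℝ | (∑ i, c i * x i) = α} = {x | f x = α} := rfl
      rw [this]
      exact convex_hyperplane f.isLinear α
    exact hP₁conv.inter hhyp
  · -- P' ⊆ K
    intro x hx
    exact hP₁K x hx.1
  · -- 0 ∉ P'
    rintro ⟨-, h⟩
    simp only [Set.mem_setOf_eq, Pi.zero_apply, mul_zero, Finset.sum_const_zero] at h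
    linarith
  · -- unique base point
    intro u hu hune
    have hfu : f u < 0 := hfneg u hu hune
    have hfune : f u ≠ 0 := ne_of_lt hfu
    have hαne : α ≠ 0 := ne_of_lt hα
    set t : ℝ := f u / α with htdef
    have ht : 0 < t := div_pos_of_neg_of_neg hfu hα
    have htne : t ≠ 0 := ne_of_gt ht
    set v : Fin n → ℝ := t⁻¹ • u with hvdef
    have hvK : v ∈ Kcone P V := hscale t⁻¹ (inv_nonneg.mpr ht.le) u hu
    have hfv : f v = α := by
      rw [hvdef, map_smul, smul_eq_mul, htdef, inv_div, div_mul_cancel₀ α hfune]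
    have hvP₁ : v ∈ (fun p => p - V) '' P := hconeP₁ v hvK hfv
    have hvP' : v ∈ ((fun p => p - V) '' P) ∩ {x | (∑ i, c i * x i) = α} := ⟨hvP₁, hfv⟩
    refine ⟨(t, v), ⟨ht, hvP', (smul_inv_smul₀ htne u).symm⟩, ?_⟩
    rintro ⟨t', v'⟩ ⟨ht', hv', huv'⟩
    dsimp only at ht' hv' huv' ⊢
    have hfv' : f v' = α := hv'.2
    have htt : t' = t := by
      have h1 : f u = t' * α := by rw [huv', map_smul, smul_eq_mul, hfv']
      have h2 : f u = t * α := by rw [htdef, div_mul_cancel₀ _ hαne]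
      exact mul_right_cancel₀ hαne (h1.symm.trans h2)
    have hu1 : t • v' = u := by rw [huv', htt]
    have hu2 : t • v = u := smul_inv_smul₀ htne u
    have hvv : v' = v := smul_right_injective (Fin n → ℝ) htne (hu1.trans hu2.symm)
    rw [Prod.ext_iff]
    exact ⟨htt, hvv⟩
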